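/- arXiv:2410.20224 — 2 statements merged into one kernel-verified Lean document; each statement's English description precedes it below -/
import Mathlib

section
/- For every configuration C that contains a set with at least two elements (i.e., C is not a singleton configuration and is not forced to be one), there exist configurations A and B, each strictly dominated by C, such that C is a combination of A and B. (Configuration splitting.) -/
namespace RoundElim

/-- The configuration (multiset of cardinality `δ`) associated to a function `Fin δ → α`. -/
def ofFn {α : Type*} {δ : ℕ} (f : Fin δ → α) : Multiset α :=
  (List.ofFn f : List α)

variable {σ : Type*} [DecidableEq σ]

/-- `DominatedBy A B` means: configuration `B` dominates configuration `A`. -/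
def DominatedBy (A B : Multiset (Finset σ)) : Prop :=
  Multiset.Rel (· ⊆ ·) A B

/-- `StrictlyDominatedBy A B` means: configuration `B` strictly dominates configuration `A`. -/
def StrictlyDominatedBy (A B : Multiset (Finset σ)) : Prop :=
  DominatedBy A B ∧ ¬ DominatedBy B A

/-- The combination of the representatives `a`, `b` with respect to the permutation `φ`
and the index `u`: union at position `u`, intersection everywhere else. -/
def combineFn {δ : ℕ} (a b : Fin δ → Finset σ) (φ : Equiv.Perm (Fin δ)) (u : Fin δ) :
    Fin δ → Finset σ :=
  fun i => if i = u then a i ∪ b (φ i) else a i ∩ b (φ i)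

/-- `C` is a combination of the configurations `A` and `B`. -/
def IsCombination (δ : ℕ) (C A B : Multiset (Finset σ)) : Prop :=
  ∃ (a b : Fin δ → Finset σ) (φ : Equiv.Perm (Fin δ)) (u : Fin δ),
    ofFn a = A ∧ ofFn b = B ∧ ofFn (combineFn a b φ u) = C

/-- `C` satisfies the universal quantifier w.r.t. the edge constraint `E`. -/
def SatUQ (E : Set (Multiset σ)) (C : Multiset (Finset σ)) : Prop :=
  ∀ M : Multiset σ, Multiset.Rel (· ∈ ·) M C → M ∈ E

/-- A singleton configuration: all its sets have exactly one element. -/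
def IsSingletonConfig (C : Multiset (Finset σ)) : Prop :=
  ∀ s ∈ C, s.card = 1

/-- The combination-closure of a set `Γ` of configurations: the smallest set containing `Γ`
and containing every combination of two of its members. -/
inductive CombClosure (δ : ℕ) (Γ : Set (Multiset (Finset σ))) :
    Multiset (Finset σ) → Prop
  | base {C : Multiset (Finset σ)} : C ∈ Γ → CombClosure δ Γ C
  | comb {A B C : Multiset (Finset σ)} : CombClosure δ Γ A → CombClosure δ Γ B →
      IsCombination δ C A B → CombClosure δ Γ C

lemma ofFn_succ {α : Type*} {n : ℕ} (f : Fin (n + 1) → α) :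
    ofFn f = f 0 ::ₘ ofFn (fun i => f i.succ) := by
  simp [ofFn, List.ofFn_succ]

lemma rel_ofFn {α β : Type*} {r : α → β → Prop} :
    ∀ {n : ℕ} {f : Fin n → α} {g : Fin n → β},
    (∀ i, r (f i) (g i)) → Multiset.Rel r (ofFn f) (ofFn g)
  | 0, f, g, _ => by simp [ofFn]
  | n + 1, f, g, h => by
    rw [ofFn_succ, ofFn_succ]
    exact Multiset.Rel.cons (h 0) (rel_ofFn fun i => h i.succ)

lemma sum_card_le_of_dominatedBy {A B : Multiset (Finset σ)} (h : DominatedBy A B) :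
    (A.map Finset.card).sum ≤ (B.map Finset.card).sum := by
  induction h with
  | zero => simp
  | cons hab _ ih =>
    simp only [Multiset.map_cons, Multiset.sum_cons]
    exact add_le_add (Finset.card_le_card hab) ih

lemma sum_card_ofFn {δ : ℕ} (f : Fin δ → Finset σ) :
    ((ofFn f).map Finset.card).sum = ∑ i, (f i).card := by
  simp [ofFn, Multiset.map_coe, List.map_ofFn, List.sum_ofFn]

/-- Configuration splitting: every configuration containing a set with at least two elements
is a combination of two configurations that it strictly dominates. -/
theorem configuration_splitting {σ : Type*} [Fintype σ] [DecidableEq σ] (δ : ℕ) (hδ : 0 < δ)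
    (C : Multiset (Finset σ)) (hCcard : Multiset.card C = δ)
    (hbig : ∃ s ∈ C, 2 ≤ s.card) :
    ∃ A B : Multiset (Finset σ),
      StrictlyDominatedBy A C ∧ StrictlyDominatedBy B C ∧ IsCombination δ C A B := by
  obtain ⟨s, hsC, hs2⟩ := hbig
  obtain ⟨C', rfl⟩ := Multiset.exists_cons_of_mem hsC
  -- build a list representing C with s first
  set L : List (Finset σ) := s :: C'.toList with hL
  have hLC : (L : Multiset (Finset σ)) = s ::ₘ C' := by
    rw [hL, ← Multiset.cons_coe, Multiset.coe_toList]
  have hlen : L.length = δ := by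
    have := hCcard
    simp [hL, ← this]
  -- the representing function
  subst hlen
  set c : Fin L.length → Finset σ := L.get with hc
  have hofc : ofFn c = s ::ₘ C' := by
    rw [hc, ofFn]
    rw [List.ofFn_get]
    exact hLC
  obtain ⟨x, hx⟩ := Finset.card_pos.mp (lt_of_lt_of_le (by norm_num) hs2)
  have hL0 : 0 < L.length := by simp [hL]
  set u : Fin L.length := ⟨0, hL0⟩ with hu
  have hcu : c u = s := by simp [hc, hu, hL]
  set a : Fin L.length → Finset σ := Function.update c u (s \ {x}) with ha
  set b : Fin L.length → Finset σ := Function.update c u {x} with hb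
  have hax : ∀ i, a i ⊆ c i := by
    intro i
    by_cases hi : i = u
    · subst hi; simp [ha, hcu]
    · simp [ha, Function.update_of_ne hi]
  have hbx : ∀ i, b i ⊆ c i := by
    intro i
    by_cases hi : i = u
    · subst hi; simp [hb, hcu, Finset.singleton_subset_iff, hx]
    · simp [hb, Function.update_of_ne hi]
  have hcomb : combineFn a b 1 u = c := by
    funext i
    by_cases hi : i = u
    · subst hi
      simp only [combineFn, if_pos rfl, ha, hb, Function.update_self, hcu]
      exact Finset.sdiff_union_of_subset (Finset.singleton_subset_iff.mpr hx)
    · simp [combineFn, hi, ha, hb, Function.update_of_ne hi]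
  -- strict sum inequality
  have hsumlt : ∀ f : Fin L.length → Finset σ, (∀ i, f i ⊆ c i) → (f u).card < (c u).card →
      ((ofFn f).map Finset.card).sum < ((ofFn c).map Finset.card).sum := by
    intro f hsub hlt
    rw [sum_card_ofFn, sum_card_ofFn]
    apply Finset.sum_lt_sum (fun i _ => Finset.card_le_card (hsub i))
    exact ⟨u, Finset.mem_univ u, hlt⟩
  have hstrict : ∀ f : Fin L.length → Finset σ, (∀ i, f i ⊆ c i) → (f u).card < (c u).card →
      StrictlyDominatedBy (ofFn f) (s ::ₘ C') := by
    intro f hsub hlt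
    constructor
    · rw [← hofc]; exact rel_ofFn hsub
    · intro hdom
      have := sum_card_le_of_dominatedBy hdom
      rw [← hofc] at this
      exact absurd this (not_le.mpr (hsumlt f hsub hlt))
  refine ⟨ofFn a, ofFn b, hstrict a hax ?_, hstrict b hbx ?_, a, b, 1, u, rfl, rfl, ?_⟩
  · rw [hcu]
    simp [ha]
    have : (s \ {x}).card < s.card :=
      Finset.card_lt_card (Finset.sdiff_ssubset (Finset.singleton_subset_iff.mpr hx)
        (Finset.singleton_nonempty x))
    exact this
  · rw [hcu]
    simp [hb]
    omega
  · rw [hcomb, hofc]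

end RoundElim
end

section
/- Let E be an edge constraint and Γ a set of configurations such that every singleton configuration satisfying the universal quantifier w.r.t. E is dominated by some member of Γ. Then for every configuration C, all of whose sets are nonempty, that satisfies the universal quantifier w.r.t. E, the combination-closure of Γ contains a configuration dominating C. (Combination is complete.) -/
namespace RoundElim

variable {σ : Type*} [DecidableEq σ]

section Helpers
variable {α β : Type*}


lemma rel_coe_left {r : α → β → Prop} :
    ∀ (l : List α) (M : Multiset β), Multiset.Rel r ↑l M →
      ∃ l' : List β, (l' : Multiset β) = M ∧ List.Forall₂ r l l'
  | [], M, h => by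
      rw [Multiset.coe_nil, Multiset.rel_zero_left] at h
      exact ⟨[], by simp [h], List.Forall₂.nil⟩
  | a :: l, M, h => by
      rw [← Multiset.cons_coe, Multiset.rel_cons_left] at h
      obtain ⟨b, bs, hr, hrel, rfl⟩ := h
      obtain ⟨l', rfl, hf⟩ := rel_coe_left l bs hrel
      exact ⟨b :: l', by rw [← Multiset.cons_coe], hf.cons hr⟩

lemma rel_coe_of_forall₂ {r : α → β → Prop} :
    ∀ {l₁ : List α} {l₂ : List β}, List.Forall₂ r l₁ l₂ → Multiset.Rel r ↑l₁ ↑l₂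
  | _, _, .nil => Multiset.Rel.zero
  | _, _, .cons h t => by
      rw [← Multiset.cons_coe, ← Multiset.cons_coe]
      exact (rel_coe_of_forall₂ t).cons h

lemma coe_ofFn_get (l : List α) {δ : ℕ} (h : l.length = δ) :
    ofFn (fun i : Fin δ => l.get (Fin.cast h.symm i)) = (l : Multiset α) := by
  unfold ofFn
  congr 1
  apply List.ext_get (by simp [h])
  intro n h1 h2
  simp [List.get_ofFn]

lemma rel_ofFn_ofFn {δ : ℕ} {r : α → β → Prop} {f : Fin δ → α} {g : Fin δ → β}
    (h : ∀ i, r (f i) (g i)) : Multiset.Rel r (ofFn f) (ofFn g) := by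
  apply rel_coe_of_forall₂
  apply List.forall₂_of_length_eq_of_get (by simp)
  intro i h1 h2
  simpa [List.get_ofFn] using h _

lemma rel_ofFn_left {δ : ℕ} {r : α → β → Prop} {f : Fin δ → α} {M : Multiset β}
    (h : Multiset.Rel r (ofFn f) M) :
    ∃ g : Fin δ → β, ofFn g = M ∧ ∀ i, r (f i) (g i) := by
  obtain ⟨l', hl', hf⟩ := rel_coe_left _ _ h
  have hlen : l'.length = δ := by simpa using hf.length_eq.symm
  refine ⟨fun i => l'.get (Fin.cast hlen.symm i), by rw [coe_ofFn_get l' hlen, hl'], ?_⟩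
  intro i
  have := (List.forall₂_iff_get.mp hf).2 i (by simp [i.isLt]) (by simp [hlen, i.isLt])
  simpa [List.get_ofFn] using this

lemma rel_ofFn_right {δ : ℕ} {r : α → β → Prop} {g : Fin δ → β} {M : Multiset α}
    (h : Multiset.Rel r M (ofFn g)) :
    ∃ f : Fin δ → α, ofFn f = M ∧ ∀ i, r (f i) (g i) := by
  obtain ⟨f, hf, hp⟩ := rel_ofFn_left (r := flip r) (Multiset.rel_flip.mpr h)
  exact ⟨f, hf, hp⟩

lemma exists_ofFn {δ : ℕ} (M : Multiset α) (h : Multiset.card M = δ) :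
    ∃ f : Fin δ → α, ofFn f = M := by
  have hlen : M.toList.length = δ := by simpa using h
  exact ⟨_, by rw [coe_ofFn_get M.toList hlen, Multiset.coe_toList]⟩

lemma mem_ofFn {δ : ℕ} {f : Fin δ → α} {s : α} (h : s ∈ ofFn f) : ∃ i, f i = s := by
  simpa [ofFn, List.mem_ofFn, Set.mem_range] using h

lemma card_ofFn {δ : ℕ} (f : Fin δ → α) : Multiset.card (ofFn f) = δ := by simp [ofFn]

lemma sum_map_ofFn {δ : ℕ} (f : Fin δ → α) (g : α → ℕ) :
    ((ofFn f).map g).sum = ∑ i, g (f i) := by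
  simp [ofFn, Multiset.map_coe, List.sum_ofFn]
end Helpers

section Main
variable {σ : Type*} [Fintype σ] [DecidableEq σ]

lemma aux_complete (δ : ℕ) (hδ : 0 < δ) (E : Set (Multiset σ)) (Γ : Set (Multiset (Finset σ)))
    (hΓsing : ∀ M : Multiset (Finset σ), Multiset.card M = δ → IsSingletonConfig M →
      SatUQ E M → ∃ A ∈ Γ, DominatedBy M A) :
    ∀ (n : ℕ) (c : Fin δ → Finset σ), (∑ i, (c i).card) ≤ n →
      (∀ i, (c i).Nonempty) → SatUQ E (ofFn c) →
      ∃ C', CombClosure δ Γ C' ∧ DominatedBy (ofFn c) C' := by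
  intro n
  induction n with
  | zero =>
      intro c hsum hne _
      exfalso
      obtain ⟨u⟩ : Nonempty (Fin δ) := ⟨⟨0, hδ⟩⟩
      have : 0 < ∑ i, (c i).card :=
        Finset.sum_pos' (fun _ _ => Nat.zero_le _)
          ⟨u, Finset.mem_univ u, Finset.card_pos.mpr (hne u)⟩
      omega
  | succ n ih =>
      intro c hsum hne huq
      by_cases hsing : ∀ i, (c i).card = 1
      · have hcard : Multiset.card (ofFn c) = δ := card_ofFn c
        have hsc : IsSingletonConfig (ofFn c) := by
          intro s hs
          obtain ⟨i, rfl⟩ := mem_ofFn hs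
          exact hsing i
        obtain ⟨A, hA, hdom⟩ := hΓsing (ofFn c) hcard hsc huq
        exact ⟨A, CombClosure.base hA, hdom⟩
      · push_neg at hsing
        obtain ⟨u, hu⟩ := hsing
        have hu2 : 2 ≤ (c u).card := by
          have := Finset.card_pos.mpr (hne u)
          omega
        obtain ⟨x, hx⟩ := hne u
        set a := Function.update c u {x} with ha_def
        set b := Function.update c u ((c u).erase x) with hb_def
        have hae : ∀ i, a i ⊆ c i := by
          intro i
          by_cases h : i = u
          · rw [h]; simpa [ha_def] using hx
          · simp [ha_def, Function.update_of_ne h]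
        have hbe : ∀ i, b i ⊆ c i := by
          intro i
          by_cases h : i = u
          · rw [h]; simpa [hb_def] using Finset.erase_subset x (c u)
          · simp [hb_def, Function.update_of_ne h]
        have hane : ∀ i, (a i).Nonempty := by
          intro i
          by_cases h : i = u
          · rw [h]; simp [ha_def]
          · simpa [ha_def, Function.update_of_ne h] using hne i
        have hbne : ∀ i, (b i).Nonempty := by
          intro i
          by_cases h : i = u
          · rw [h, hb_def]
            simp only [Function.update_self]
            rw [← Finset.card_pos, Finset.card_erase_of_mem hx]
            omega
          · simpa [hb_def, Function.update_of_ne h] using hne i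
        -- SatUQ for sub-configurations
        have huq' : ∀ d : Fin δ → Finset σ, (∀ i, d i ⊆ c i) → SatUQ E (ofFn d) := by
          intro d hd M hM
          obtain ⟨m, rfl, hm⟩ := rel_ofFn_right hM
          exact huq _ (rel_ofFn_ofFn fun i => hd i (hm i))
        -- size bounds
        have hsum_split : ∀ d : Fin δ → Finset σ, ∑ i, (d i).card =
            (d u).card + ∑ i ∈ Finset.univ.erase u, (d i).card := by
          intro d
          exact (Finset.add_sum_erase _ _ (Finset.mem_univ u)).symm
        have hrest : ∀ (d : Fin δ → Finset σ), (∀ i, d i = c i ∨ i = u) →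
            ∑ i ∈ Finset.univ.erase u, (d i).card = ∑ i ∈ Finset.univ.erase u, (c i).card := by
          intro d hd
          apply Finset.sum_congr rfl
          intro i hi
          rcases hd i with h | h
          · rw [h]
          · exact absurd h (Finset.ne_of_mem_erase hi)
        have hupd : ∀ s : Finset σ, ∀ i, Function.update c u s i = c i ∨ i = u := by
          intro s i
          by_cases h : i = u
          · exact Or.inr h
          · exact Or.inl (Function.update_of_ne h _ _)
        have hsa : ∑ i, (a i).card ≤ n := by
          have := hsum_split a
          rw [hrest a (hupd _)] at this
          have h2 := hsum_split c
          have hau : (a u).card = 1 := by simp [ha_def]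
          omega
        have hsb : ∑ i, (b i).card ≤ n := by
          have := hsum_split b
          rw [hrest b (hupd _)] at this
          have h2 := hsum_split c
          have hbu : (b u).card = (c u).card - 1 := by
            simp [hb_def, Finset.card_erase_of_mem hx]
          omega
        obtain ⟨A', hA', hdomA⟩ := ih a hsa hane (huq' a hae)
        obtain ⟨B', hB', hdomB⟩ := ih b hsb hbne (huq' b hbe)
        obtain ⟨a', ha', hpa⟩ := rel_ofFn_left hdomA
        obtain ⟨b', hb', hpb⟩ := rel_ofFn_left hdomB
        refine ⟨ofFn (combineFn a' b' 1 u), ?_, ?_⟩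
        · exact CombClosure.comb hA' hB' ⟨a', b', 1, u, ha', hb', rfl⟩
        · apply rel_ofFn_ofFn
          intro i
          by_cases h : i = u
          · rw [h]
            simp only [combineFn, if_pos rfl, Equiv.Perm.one_apply]
            intro y hy
            rcases eq_or_ne y x with rfl | hyx
            · exact Finset.mem_union_left _ (hpa u (by rw [ha_def]; simp))
            · exact Finset.mem_union_right _ (hpb u (by
                rw [hb_def]
                simp only [Function.update_self]
                exact Finset.mem_erase.mpr ⟨hyx, hy⟩))
          · simp only [combineFn, if_neg h, Equiv.Perm.one_apply]
            intro y hy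
            refine Finset.mem_inter.mpr ⟨hpa i ?_, hpb i ?_⟩
            · rwa [ha_def, Function.update_of_ne h]
            · rwa [hb_def, Function.update_of_ne h]
end Main

/-- Combination is complete: if every singleton configuration satisfying the universal
quantifier w.r.t. `E` is dominated by some member of `Γ`, then for every configuration `C`
with nonempty sets satisfying the universal quantifier w.r.t. `E`, the combination-closure
of `Γ` contains a configuration dominating `C`. -/
theorem combination_complete {σ : Type*} [Fintype σ] [DecidableEq σ] (δ : ℕ) (hδ : 0 < δ)
    (E : Set (Multiset σ)) (Γ : Set (Multiset (Finset σ)))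
    (hΓsing : ∀ M : Multiset (Finset σ), Multiset.card M = δ → IsSingletonConfig M →
      SatUQ E M → ∃ A ∈ Γ, DominatedBy M A)
    (C : Multiset (Finset σ)) (hCcard : Multiset.card C = δ)
    (hCne : ∀ s ∈ C, s.Nonempty) (hCuq : SatUQ E C) :
    ∃ C' : Multiset (Finset σ), CombClosure δ Γ C' ∧ DominatedBy C C' := by
  obtain ⟨c, rfl⟩ := exists_ofFn C hCcard
  exact aux_complete δ hδ E Γ hΓsing _ c le_rfl
    (fun i => hCne _ (by simp [ofFn, List.mem_ofFn])) hCuq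

end RoundElim
end
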